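/- Let D be a finite multiset of instance values with P(D) ≥ 1 (the dataset) and let C ⊆ D be a sub-multiset with P(C) ≥ 1 (the cover of a pattern). Then oe(C) = PRAUC(D) − b_PRAUC(C) is a tight optimistic estimate for the relative PR AUC interestingness φ^{rPRAUC}: (i) for every sub-multiset C' ⊆ C with P(C') ≥ 1, PRAUC(D) − PRAUC(C') ≤ oe(C); and (ii) there exists a sub-multiset C' ⊆ C with P(C') ≥ 1 such that PRAUC(D) − PRAUC(C') = oe(C). -/

import Mathlib

/-- An instance value: a label (`true` = positive, i.e. `y = 1`;
`false` = negative, i.e. `y = 0`) together with a real prediction score. -/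
abbrev Inst : Type := Bool × ℝ

/-- `P C`: the number of positive elements of `C`. -/
def P (C : Multiset Inst) : ℕ := (C.filter (fun c => c.1 = true)).card

/-- `N C`: the number of negative elements of `C`. -/
def N (C : Multiset Inst) : ℕ := (C.filter (fun c => c.1 = false)).card

/-- `TP C t`: the number of positives of `C` with prediction strictly above `t`. -/
noncomputable def TP (C : Multiset Inst) (t : ℝ) : ℕ :=
  (C.filter (fun c => c.1 = true ∧ t < c.2)).card

/-- `FP C t`: the number of negatives of `C` with prediction strictly above `t`. -/
noncomputable def FP (C : Multiset Inst) (t : ℝ) : ℕ :=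
  (C.filter (fun c => c.1 = false ∧ t < c.2)).card

/-- The ROC/PR supporting points `(TP, FP)` of `C`, listed in order of
decreasing threshold, for `t` ranging over the prediction values occurring in
`C` together with `t = -∞` (the latter yielding the final point `(P C, N C)`). -/
noncomputable def supportingPoints (C : Multiset Inst) : List (ℝ × ℝ) :=
  (((C.map Prod.snd).toFinset.sort (· ≤ ·)).reverse.map
    (fun t => ((TP C t : ℝ), (FP C t : ℝ)))) ++ [((P C : ℝ), (N C : ℝ))]

/-- The trapezoidal sum `Σ_{i=2}^{k} |FP_i − FP_{i−1}| · (TP_i + TP_{i−1})/2`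
over a list of `(TP, FP)` points. -/
noncomputable def trapROC : List (ℝ × ℝ) → ℝ
  | [] => 0
  | [_] => 0
  | a :: b :: l => |b.2 - a.2| * (b.1 + a.1) / 2 + trapROC (b :: l)

/-- The area under the ROC curve of `C` (defined whenever `P C ≥ 1` and `N C ≥ 1`). -/
noncomputable def ROCAUC (C : Multiset Inst) : ℝ :=
  trapROC (supportingPoints C) / ((P C : ℝ) * (N C : ℝ))

/-- The trapezoidal sum `Σ_{i=2}^{k} |TP_i − TP_{i−1}| ·
(TP_i/(TP_i+FP_i) + TP_{i−1}/(TP_{i−1}+FP_{i−1}))/2` over a list of `(TP, FP)`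
points; in `ℝ`, division by zero yields `0`, realizing the convention `0/0 = 0`. -/
noncomputable def trapPR : List (ℝ × ℝ) → ℝ
  | [] => 0
  | [_] => 0
  | a :: b :: l =>
      |b.1 - a.1| * (b.1 / (b.1 + b.2) + a.1 / (a.1 + a.2)) / 2 + trapPR (b :: l)

/-- The (linearly interpolated) area under the PR curve of `C`
(defined whenever `P C ≥ 1`). -/
noncomputable def PRAUC (C : Multiset Inst) : ℝ :=
  trapPR (supportingPoints C) / (P C : ℝ)


section Aux

lemma card_filter_le_of {α : Type*} (s : Multiset α) (p q : α → Prop)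
    [DecidablePred p] [DecidablePred q] (h : ∀ x ∈ s, p x → q x) :
    (s.filter p).card ≤ (s.filter q).card := by
  have h1 : s.filter p = (s.filter q).filter p := by
    rw [Multiset.filter_filter]
    exact (Multiset.filter_congr (fun x hx =>
      ⟨fun hp => ⟨hp, h x hx hp⟩, fun hpq => hpq.1⟩))
  rw [h1]
  exact Multiset.card_le_card (Multiset.filter_le _ _)

lemma between_chain (S : Set ℝ) :
    ∀ l : List ℝ, l.Pairwise (· > ·) →
    (∀ s ∈ S, s ∈ l ∨ ∀ x ∈ l, x ≤ s) →
    List.Chain' (fun a b => b < a ∧ ∀ s ∈ S, b < s → a ≤ s) l := by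
  intro l
  induction l with
  | nil => intro _ _; exact List.isChain_nil
  | cons a t ih =>
    intro hs hmem
    rcases List.pairwise_cons.mp hs with ⟨ha, ht⟩
    cases t with
    | nil => exact List.isChain_singleton _
    | cons b u =>
      simp only [List.Chain', List.isChain_cons_cons]
      constructor
      · refine ⟨ha b (by simp), ?_⟩
        intro s hsS hbs
        rcases hmem s hsS with h | h
        · rcases List.mem_cons.mp h with rfl | h
          · exact le_refl _
          · rcases List.mem_cons.mp h with rfl | h
            · exact absurd hbs (lt_irrefl _)
            · exact absurd hbs (not_lt.mpr (le_of_lt ((List.pairwise_cons.mp ht).1 s h)))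
        · exact h a (by simp)
      · apply ih ht
        intro s hsS
        rcases hmem s hsS with h | h
        · rcases List.mem_cons.mp h with rfl | h
          · exact Or.inr (fun x hx => le_of_lt (ha x hx))
          · exact Or.inl h
        · exact Or.inr (fun x hx => h x (List.mem_cons_of_mem a hx))

lemma trapPR_ge (K : ℝ) : ∀ (l : List (ℝ × ℝ)) (hl : l ≠ []),
    (∀ p ∈ l, 0 ≤ p.1 ∧ 0 ≤ p.2) →
    List.Chain' (fun p q => p.1 ≤ q.1 ∧ (p.1 < q.1 → K ≤ q.1 / (q.1 + q.2))) l →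
    ((l.getLast hl).1 - (l.head hl).1) * K / 2 ≤ trapPR l := by
  intro l
  induction l with
  | nil => intro h; exact absurd rfl h
  | cons a t ih =>
    intro _ hnn hch
    cases t with
    | nil => simp [trapPR]
    | cons b u =>
      simp only [List.Chain', List.isChain_cons_cons] at hch
      have IH := ih (by simp) (fun p hp => hnn p (List.mem_cons_of_mem a hp)) hch.2
      have hlast : ((a :: b :: u).getLast (by simp)) = ((b :: u).getLast (by simp)) :=
        List.getLast_cons _
      rw [hlast, List.head_cons]
      have hpa : (0:ℝ) ≤ a.1 / (a.1 + a.2) := by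
        have := hnn a (by simp); exact div_nonneg this.1 (add_nonneg this.1 this.2)
      have hstep : (b.1 - a.1) * K / 2 ≤ |b.1 - a.1| * (b.1 / (b.1 + b.2) + a.1 / (a.1 + a.2)) / 2 := by
        rcases lt_or_eq_of_le hch.1.1 with hlt | heq
        · have hK := hch.1.2 hlt
          rw [abs_of_pos (by linarith)]
          nlinarith [hlt]
        · rw [← heq]
          simp
      show (((b :: u).getLast (by simp)).1 - a.1) * K / 2 ≤
        |b.1 - a.1| * (b.1 / (b.1 + b.2) + a.1 / (a.1 + a.2)) / 2 + trapPR (b :: u)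
      rw [List.head_cons] at IH
      linarith

lemma trapPR_le (K : ℝ) : ∀ (l : List (ℝ × ℝ)) (hl : l ≠ []),
    List.Chain' (fun p q => p.1 ≤ q.1 ∧ (p.1 < q.1 → q.1 / (q.1 + q.2) + p.1 / (p.1 + p.2) ≤ K)) l →
    trapPR l ≤ ((l.getLast hl).1 - (l.head hl).1) * K / 2 := by
  intro l
  induction l with
  | nil => intro h; exact absurd rfl h
  | cons a t ih =>
    intro _ hch
    cases t with
    | nil => simp [trapPR]
    | cons b u =>
      simp only [List.Chain', List.isChain_cons_cons] at hch
      have IH := ih (by simp) hch.2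
      have hlast : ((a :: b :: u).getLast (by simp)) = ((b :: u).getLast (by simp)) :=
        List.getLast_cons _
      rw [hlast, List.head_cons]
      have hstep : |b.1 - a.1| * (b.1 / (b.1 + b.2) + a.1 / (a.1 + a.2)) / 2 ≤ (b.1 - a.1) * K / 2 := by
        rcases lt_or_eq_of_le hch.1.1 with hlt | heq
        · have hK := hch.1.2 hlt
          rw [abs_of_pos (by linarith)]
          nlinarith [hlt]
        · rw [← heq]
          simp
      show |b.1 - a.1| * (b.1 / (b.1 + b.2) + a.1 / (a.1 + a.2)) / 2 + trapPR (b :: u) ≤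
        (((b :: u).getLast (by simp)).1 - a.1) * K / 2
      rw [List.head_cons] at IH
      linarith

end Aux
lemma mem_le_head (l : List ℝ) (h : l ≠ []) (hp : l.Pairwise (· > ·))
    (x : ℝ) (hx : x ∈ l) : x ≤ l.head h := by
  obtain ⟨a, t, rfl⟩ := List.exists_cons_of_ne_nil h
  rcases List.mem_cons.mp hx with rfl | hm
  · exact le_refl _
  · exact le_of_lt ((List.pairwise_cons.mp hp).1 x hm)

lemma head_append_singleton {α : Type*} (l : List α) (x : α) (hl : l ≠ [])
    (h : l ++ [x] ≠ []) : (l ++ [x]).head h = l.head hl := by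
  obtain ⟨a, t, rfl⟩ := List.exists_cons_of_ne_nil hl
  rfl

lemma getLast_append_singleton {α : Type*} (l : List α) (x : α)
    (h : l ++ [x] ≠ []) : (l ++ [x]).getLast h = x := by
  simp [List.getLast_append]

lemma rep (C'' : Multiset Inst) (hne : C'' ≠ 0) :
    ∃ (e : List ℝ) (he : e ≠ []),
      supportingPoints C'' = e.map (fun t => ((TP C'' t : ℝ), (FP C'' t : ℝ))) ∧
      List.Chain' (fun a b => b < a ∧ ∀ c ∈ C'', b < c.2 → a ≤ c.2) e ∧
      TP C'' (e.head he) = 0 ∧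
      TP C'' (e.getLast he) = P C'' ∧ FP C'' (e.getLast he) = N C'' := by
  classical
  set vals := (C''.map Prod.snd).toFinset with hvals
  obtain ⟨c, hc⟩ := Multiset.exists_mem_of_ne_zero hne
  have hmemvals : ∀ x ∈ C'', x.2 ∈ vals := by
    intro x hx
    rw [hvals, Multiset.mem_toFinset]
    exact Multiset.mem_map_of_mem _ hx
  have hvne : vals.Nonempty := ⟨c.2, hmemvals c hc⟩
  set tinf := vals.min' hvne - 1 with htinf
  have hbig : ∀ x ∈ C'', tinf < x.2 := by
    intro x hx
    have := vals.min'_le x.2 (hmemvals x hx)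
    linarith [this]
  set d := (vals.sort (· ≤ ·)).reverse with hd
  have hdp : d.Pairwise (· > ·) := by
    rw [hd, List.pairwise_reverse]
    exact (Finset.sortedLT_sort vals).pairwise
  have hdmem : ∀ x ∈ C'', x.2 ∈ d := by
    intro x hx
    rw [hd, List.mem_reverse, Finset.mem_sort]
    exact hmemvals x hx
  have hdvals : ∀ y ∈ d, y ∈ vals := by
    intro y hy
    rw [hd, List.mem_reverse, Finset.mem_sort] at hy
    exact hy
  have hdne : d ≠ [] := by
    intro h
    have := hdmem c hc
    rw [h] at this
    exact absurd this List.not_mem_nil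
  have hTPinf : TP C'' tinf = P C'' := by
    rw [TP, P]
    congr 1
    exact Multiset.filter_congr (fun x hx => ⟨fun h => h.1, fun h => ⟨h, hbig x hx⟩⟩)
  have hFPinf : FP C'' tinf = N C'' := by
    rw [FP, N]
    congr 1
    exact Multiset.filter_congr (fun x hx => ⟨fun h => h.1, fun h => ⟨h, hbig x hx⟩⟩)
  refine ⟨d ++ [tinf], by simp, ?_, ?_, ?_, ?_, ?_⟩
  · -- supportingPoints equation
    rw [supportingPoints, List.map_append, ← hd]
    simp [hTPinf, hFPinf]
  · -- chain
    have hep : (d ++ [tinf]).Pairwise (· > ·) := by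
      rw [List.pairwise_append]
      refine ⟨hdp, by simp, ?_⟩
      intro x hx y hy
      rw [List.mem_singleton] at hy
      subst hy
      have := vals.min'_le x (hdvals x hx)
      simp only [gt_iff_lt, htinf]
      linarith
    have hch := between_chain {s | ∃ x ∈ C'', x.2 = s} (d ++ [tinf]) hep ?_
    · exact hch.imp (fun a b hab =>
        ⟨hab.1, fun x hx hbx => hab.2 x.2 ⟨x, hx, rfl⟩ hbx⟩)
    · rintro s ⟨x, hx, rfl⟩
      exact Or.inl (List.mem_append_left _ (hdmem x hx))
  · -- head
    rw [head_append_singleton d tinf hdne]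
    rw [TP, Multiset.card_eq_zero, Multiset.filter_eq_nil]
    intro x hx hcon
    exact absurd hcon.2 (not_lt.mpr (mem_le_head d hdne hdp x.2 (hdmem x hx)))
  · rw [getLast_append_singleton d tinf]
    exact hTPinf
  · rw [getLast_append_singleton d tinf]
    exact hFPinf
lemma PRAUC_ge_aux (C C'' : Multiset Inst) (m : ℝ) (hsub : C'' ≤ C) (hP : 1 ≤ P C'')
    (hm : ∀ c ∈ C'', c.1 = true → m ≤ c.2) :
    1 / (1 + ((C.filter (fun c => c.1 = false ∧ m ≤ c.2)).card : ℝ)) / 2 ≤ PRAUC C'' := by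
  classical
  set nge : ℝ := ((C.filter (fun c => c.1 = false ∧ m ≤ c.2)).card : ℝ) with hnge
  have hnge0 : 0 ≤ nge := by rw [hnge]; positivity
  set K : ℝ := 1 / (1 + nge) with hK
  have hne : C'' ≠ 0 := by
    intro h
    rw [h] at hP
    simp [P] at hP
  obtain ⟨e, he, hpts, hch, hhead, hlastTP, hlastFP⟩ := rep C'' hne
  set g : ℝ → ℝ × ℝ := fun t => ((TP C'' t : ℝ), (FP C'' t : ℝ)) with hg
  have hch2 : List.Chain' (fun p q => p.1 ≤ q.1 ∧ (p.1 < q.1 → K ≤ q.1 / (q.1 + q.2))) (e.map g) := by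
    simp only [List.Chain', List.isChain_map]
    refine hch.imp ?_
    rintro a b ⟨hba, hbet⟩
    simp only [hg]
    have hTPle : TP C'' a ≤ TP C'' b :=
      card_filter_le_of _ _ _ (fun c _ h => ⟨h.1, lt_trans hba h.2⟩)
    constructor
    · exact_mod_cast hTPle
    · intro hlt
      have hlt' : TP C'' a < TP C'' b := by exact_mod_cast hlt
      have hex : ∃ c ∈ C'', c.1 = true ∧ b < c.2 ∧ ¬(a < c.2) := by
        by_contra hcon
        push_neg at hcon
        have heq : C''.filter (fun c => c.1 = true ∧ b < c.2)
            = C''.filter (fun c => c.1 = true ∧ a < c.2) :=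
          Multiset.filter_congr (fun c hc =>
            ⟨fun h => ⟨h.1, hcon c hc h.1 h.2⟩, fun h => ⟨h.1, lt_trans hba h.2⟩⟩)
        have : TP C'' b = TP C'' a := by rw [TP, TP, heq]
        omega
      obtain ⟨c, hcC, hcpos, hcb, hca⟩ := hex
      have hma : m ≤ a := le_trans (hm c hcC hcpos) (not_lt.mp hca)
      have hTPb1 : 1 ≤ TP C'' b := by
        rw [TP, Nat.one_le_iff_ne_zero, ← Nat.pos_iff_ne_zero, Multiset.card_pos_iff_exists_mem]
        exact ⟨c, Multiset.mem_filter.mpr ⟨hcC, hcpos, hcb⟩⟩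
      have hFPle : (FP C'' b : ℝ) ≤ nge := by
        rw [hnge, FP]
        have h1 : (C''.filter (fun c => c.1 = false ∧ b < c.2)).card
            ≤ (C''.filter (fun c => c.1 = false ∧ m ≤ c.2)).card :=
          card_filter_le_of _ _ _ (fun x hx h =>
            ⟨h.1, le_trans hma (hbet x hx h.2)⟩)
        have h2 : (C''.filter (fun c => c.1 = false ∧ m ≤ c.2)).card
            ≤ (C.filter (fun c => c.1 = false ∧ m ≤ c.2)).card :=
          Multiset.card_le_card (Multiset.filter_le_filter _ hsub)
        exact_mod_cast le_trans h1 h2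
      have hT1 : (1 : ℝ) ≤ (TP C'' b : ℝ) := by exact_mod_cast hTPb1
      have hF0 : (0 : ℝ) ≤ (FP C'' b : ℝ) := by positivity
      show K ≤ (TP C'' b : ℝ) / ((TP C'' b : ℝ) + (FP C'' b : ℝ))
      rw [hK, div_le_div_iff₀ (by positivity) (by linarith)]
      nlinarith
  have hnn : ∀ p ∈ e.map g, 0 ≤ p.1 ∧ 0 ≤ p.2 := by
    intro p hp
    obtain ⟨t, _, rfl⟩ := List.mem_map.mp hp
    constructor <;> positivity
  have hmapne : e.map g ≠ [] := by simp [he]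
  have hmain := trapPR_ge K (e.map g) hmapne hnn hch2
  rw [List.head_map, List.getLast_map] at hmain
  have hh : (g (e.head he)).1 = 0 := by
    show ((TP C'' (e.head he) : ℝ)) = 0
    rw [hhead]; simp
  have hl : (g (e.getLast he)).1 = (P C'' : ℝ) := by
    show ((TP C'' (e.getLast he) : ℝ)) = (P C'' : ℝ)
    rw [hlastTP]
  rw [hh, hl, sub_zero] at hmain
  have hPpos : (0 : ℝ) < (P C'' : ℝ) := by exact_mod_cast hP
  rw [PRAUC, hpts, le_div_iff₀ hPpos]
  calc K / 2 * (P C'' : ℝ) = (P C'' : ℝ) * K / 2 := by ring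
    _ ≤ trapPR (e.map g) := hmain
lemma PRAUC_W_le (C : Multiset Inst) (c₀ : Inst) (hpos : c₀.1 = true) :
    PRAUC (c₀ ::ₘ C.filter (fun c => c.1 = false)) ≤
      1 / (1 + ((C.filter (fun c => c.1 = false ∧ c₀.2 ≤ c.2)).card : ℝ)) / 2 := by
  classical
  set m : ℝ := c₀.2 with hm
  set W : Multiset Inst := c₀ ::ₘ C.filter (fun c => c.1 = false) with hW
  set nge : ℝ := ((C.filter (fun c => c.1 = false ∧ m ≤ c.2)).card : ℝ) with hnge
  have hnge0 : 0 ≤ nge := by rw [hnge]; positivity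
  set K : ℝ := 1 / (1 + nge) with hK
  have hPW : P W = 1 := by
    rw [P, hW, Multiset.filter_cons_of_pos (p := fun c : Inst => c.1 = true) _ hpos]
    have : (C.filter (fun c => c.1 = false)).filter (fun c => c.1 = true) = 0 := by
      rw [Multiset.filter_eq_nil]
      intro x hx h
      rw [(Multiset.mem_filter.mp hx).2] at h
      exact Bool.false_ne_true h
    rw [this]
    rfl
  have hne : W ≠ 0 := Multiset.cons_ne_zero
  obtain ⟨e, he, hpts, hch, hhead, hlastTP, hlastFP⟩ := rep W hne
  set g : ℝ → ℝ × ℝ := fun t => ((TP W t : ℝ), (FP W t : ℝ)) with hg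
  have hch2 : List.Chain' (fun p q => p.1 ≤ q.1 ∧
      (p.1 < q.1 → q.1 / (q.1 + q.2) + p.1 / (p.1 + p.2) ≤ K)) (e.map g) := by
    simp only [List.Chain', List.isChain_map]
    refine hch.imp ?_
    rintro a b ⟨hba, hbet⟩
    simp only [hg]
    have hTPle : TP W a ≤ TP W b :=
      card_filter_le_of _ _ _ (fun c _ h => ⟨h.1, lt_trans hba h.2⟩)
    constructor
    · exact_mod_cast hTPle
    · intro hlt
      have hlt' : TP W a < TP W b := by exact_mod_cast hlt
      have hTPbP : TP W b ≤ P W := card_filter_le_of _ _ _ (fun c _ h => h.1)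
      rw [hPW] at hTPbP
      have hTPb : TP W b = 1 := by omega
      have hTPa : TP W a = 0 := by omega
      -- the unique positive above b is c₀
      have hex : ∃ c, c ∈ W.filter (fun c => c.1 = true ∧ b < c.2) := by
        rw [← Multiset.card_pos_iff_exists_mem]
        rw [TP] at hTPb
        omega
      obtain ⟨c, hcmem⟩ := hex
      obtain ⟨hcW, hcpos, hcb⟩ := Multiset.mem_filter.mp hcmem
      have hcc₀ : c = c₀ := by
        rw [hW] at hcW
        rcases Multiset.mem_cons.mp hcW with h | h
        · exact h
        · exact absurd hcpos (by rw [(Multiset.mem_filter.mp h).2]; exact Bool.false_ne_true)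
      have hbm : b < m := by rw [hm, ← hcc₀]; exact hcb
      -- nge ≤ FP W b
      have hFPge : nge ≤ (FP W b : ℝ) := by
        rw [hnge, FP, hW, Multiset.filter_cons_of_neg _ (by simp [hpos]),
          Multiset.filter_filter]
        have := card_filter_le_of C (fun c => c.1 = false ∧ m ≤ c.2)
          (fun c => (c.1 = false ∧ b < c.2) ∧ c.1 = false)
          (fun x _ h => ⟨⟨h.1, lt_of_lt_of_le hbm h.2⟩, h.1⟩)
        exact_mod_cast this
      have hF0 : (0 : ℝ) ≤ (FP W b : ℝ) := by positivity
      rw [hTPa, hTPb]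
      push_cast
      rw [zero_div, add_zero, hK]
      have h1 : (0:ℝ) < 1 + nge := by linarith
      have h2 : 1 + nge ≤ 1 + (FP W b : ℝ) := by linarith
      exact one_div_le_one_div_of_le h1 h2
  have hmapne : e.map g ≠ [] := by simp [he]
  have hmain := trapPR_le K (e.map g) hmapne hch2
  rw [List.head_map, List.getLast_map] at hmain
  have hh : (g (e.head he)).1 = 0 := by
    show ((TP W (e.head he) : ℝ)) = 0
    rw [hhead]; simp
  have hl : (g (e.getLast he)).1 = (P W : ℝ) := by
    show ((TP W (e.getLast he) : ℝ)) = (P W : ℝ)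
    rw [hlastTP]
  rw [hh, hl, sub_zero, hPW] at hmain
  push_cast at hmain
  rw [PRAUC, hpts, hPW]
  simp only [Nat.cast_one, div_one]
  calc trapPR (e.map g) ≤ (1 : ℝ) * K / 2 := hmain
    _ = K / 2 := by ring
    _ = 1 / (1 + nge) / 2 := by rw [hK]
/-- For a dataset `D` and a cover `C ⊆ D` (both containing a
positive element), `oe(C) = PRAUC D − b_PRAUC C` is a tight optimistic
estimate for the relative PR AUC interestingness
`φ^{rPRAUC}(C') = PRAUC D − PRAUC C'`, where `b_PRAUC C = PRAUC C_worst` and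
`C_worst = {c₀} ∪ (negatives of C)` for a positive element `c₀` of `C` whose
prediction value is minimal among the positives of `C`. -/
theorem bPRAUC_tight_optimistic_estimate (D C : Multiset Inst)
    (hPD : 1 ≤ P D) (hsub : C ≤ D) (hPC : 1 ≤ P C)
    (c₀ : Inst) (hc₀ : c₀ ∈ C) (hpos : c₀.1 = true)
    (hmin : ∀ c ∈ C, c.1 = true → c₀.2 ≤ c.2) :
    (∀ C' ≤ C, 1 ≤ P C' →
      PRAUC D - PRAUC C' ≤
        PRAUC D - PRAUC (c₀ ::ₘ C.filter (fun c => c.1 = false))) ∧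
    (∃ C' ≤ C, 1 ≤ P C' ∧
      PRAUC D - PRAUC C' =
        PRAUC D - PRAUC (c₀ ::ₘ C.filter (fun c => c.1 = false))) := by
  classical
  have hWle : (c₀ ::ₘ C.filter (fun c => c.1 = false)) ≤ C := by
    have h1 : C.filter (fun c => c.1 = false) ≤ C.erase c₀ := by
      have h2 : C.filter (fun c => c.1 = false)
          = (C.erase c₀).filter (fun c => c.1 = false) := by
        conv_lhs => rw [← Multiset.cons_erase hc₀]
        rw [Multiset.filter_cons_of_neg]
        simp [hpos]
      rw [h2]
      exact Multiset.filter_le _ _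
    calc c₀ ::ₘ C.filter (fun c => c.1 = false)
        ≤ c₀ ::ₘ C.erase c₀ := Multiset.cons_le_cons _ h1
      _ = C := Multiset.cons_erase hc₀
  have hPW : P (c₀ ::ₘ C.filter (fun c => c.1 = false)) = 1 := by
    rw [P, Multiset.filter_cons_of_pos (p := fun c : Inst => c.1 = true) _ hpos]
    have h0 : (C.filter (fun c => c.1 = false)).filter (fun c => c.1 = true) = 0 := by
      rw [Multiset.filter_eq_nil]
      intro x hx h
      rw [(Multiset.mem_filter.mp hx).2] at h
      exact Bool.false_ne_true h
    rw [h0]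
    rfl
  have key : ∀ C' ≤ C, 1 ≤ P C' →
      PRAUC (c₀ ::ₘ C.filter (fun c => c.1 = false)) ≤ PRAUC C' := by
    intro C' hle hP'
    refine le_trans (PRAUC_W_le C c₀ hpos) (PRAUC_ge_aux C C' c₀.2 hle hP' ?_)
    intro c hc hcpos
    exact hmin c (Multiset.mem_of_le hle hc) hcpos
  constructor
  · intro C' hle hP'
    have := key C' hle hP'
    linarith
  · exact ⟨_, hWle, le_of_eq hPW.symm, rfl⟩
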